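/- Let u ∈ L²(𝕋³;ℝ³) and ε ∈ (0,1]. Then the Constantin–E–Titi commutator identity holds almost everywhere on 𝕋³: (u⊗u)_ε = u_ε ⊗ u_ε + r_ε(u,u) − (u − u_ε) ⊗ (u − u_ε), where r_ε(u,u)(x) := ∫_{ℝ³} ρ_ε(y) (u(x−y) − u(x)) ⊗ (u(x−y) − u(x)) dy. -/

import Mathlib

noncomputable section

open MeasureTheory Real Filter ENNReal

abbrev E3 : Type := EuclideanSpace ℝ (Fin 3)
abbrev E9 : Type := EuclideanSpace ℝ (Fin 3 × Fin 3)

def TorusBox : Set E3 := {x : E3 | ∀ i : Fin 3, x i ∈ Set.Ico (0 : ℝ) (2 * π)}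

def μT : Measure E3 := volume.restrict TorusBox

def unitVec (i : Fin 3) : E3 := EuclideanSpace.single i 1

def Periodic3 {F : Type*} (f : E3 → F) : Prop :=
  ∀ (x : E3) (i : Fin 3), f (x + (2 * π) • unitVec i) = f x

def tLpNorm {F : Type*} [NormedAddCommGroup F] (q : ℝ≥0∞) (f : E3 → F) : ℝ≥0∞ :=
  eLpNorm f q μT

def besovSemi {F : Type*} [NormedAddCommGroup F] (β : ℝ) (q : ℝ≥0∞) (f : E3 → F) : ℝ≥0∞ :=
  ⨆ h : E3, tLpNorm q (fun x => f (x + h) - f x) / ENNReal.ofReal (‖h‖ ^ β)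

def besovNorm {F : Type*} [NormedAddCommGroup F] (β : ℝ) (q : ℝ≥0∞) (f : E3 → F) : ℝ≥0∞ :=
  tLpNorm q f + besovSemi β q f

structure IsMollifier (ρ : E3 → ℝ) : Prop where
  smooth : ContDiff ℝ (⊤ : ℕ∞) ρ
  nonneg : ∀ x, 0 ≤ ρ x
  radial : ∀ x y : E3, ‖x‖ = ‖y‖ → ρ x = ρ y
  support_subset : Function.support ρ ⊆ Metric.ball 0 1
  integral_one : ∫ x : E3, ρ x = 1

def mollify {F : Type*} [NormedAddCommGroup F] [NormedSpace ℝ F]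
    (ρ : E3 → ℝ) (ε : ℝ) (u : E3 → F) (x : E3) : F :=
  ∫ y : E3, ((ε ^ 3)⁻¹ * ρ (ε⁻¹ • y)) • u (x - y)

def gradVF (u : E3 → E3) (x : E3) : E9 :=
  (EuclideanSpace.equiv (Fin 3 × Fin 3) ℝ).symm
    (fun p => fderiv ℝ (fun y => u y p.1) x (unitVec p.2))

def divergence (w : E3 → E3) (x : E3) : ℝ :=
  ∑ i : Fin 3, fderiv ℝ (fun y => w y i) x (unitVec i)

def outer (a b : E3) : E9 :=
  (EuclideanSpace.equiv (Fin 3 × Fin 3) ℝ).symm (fun p => a p.1 * b p.2)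

def frob (A B : E9) : ℝ := ∑ p : Fin 3 × Fin 3, A p * B p

def rCET (ρ : E3 → ℝ) (ε : ℝ) (u : E3 → E3) (x : E3) : E9 :=
  ∫ y : E3, ((ε ^ 3)⁻¹ * ρ (ε⁻¹ • y)) • outer (u (x - y) - u x) (u (x - y) - u x)

def IsWeakGrad (u : E3 → E3) (G : E3 → E9) : Prop :=
  ∀ ψ : E3 → ℝ, ContDiff ℝ (⊤ : ℕ∞) ψ → Periodic3 ψ →
    ∀ (i j : Fin 3),
      ∫ x in TorusBox, u x i * fderiv ℝ ψ x (unitVec j) = - ∫ x in TorusBox, G x (i, j) * ψ x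

def MemH (u : E3 → E3) : Prop :=
  MemLp u 2 μT ∧ Periodic3 u ∧
  ∀ δ : ℝ, 0 < δ → ∃ w : E3 → E3, ContDiff ℝ (⊤ : ℕ∞) w ∧ Periodic3 w ∧
    (∀ x, divergence w x = 0) ∧ eLpNorm (fun x => u x - w x) 2 μT < ENNReal.ofReal δ

structure IsWeakEulerSolution (T : ℝ) (v : ℝ → E3 → E3) (v₀ : E3 → E3) : Prop where
  initMem : MemH v₀
  meas : Measurable (Function.uncurry v)
  aeH : ∀ᵐ t ∂(volume.restrict (Set.Ioo 0 T)), MemH (v t)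
  linfty : ∃ M : ℝ, ∀ᵐ t ∂(volume.restrict (Set.Ioo 0 T)), tLpNorm 2 (v t) ≤ ENNReal.ofReal M
  weakForm : ∀ φ : ℝ → E3 → E3, ContDiff ℝ (⊤ : ℕ∞) (Function.uncurry φ) →
    (∀ t, Periodic3 (φ t)) → (∀ t x, divergence (φ t) x = 0) →
    (∃ T' : ℝ, T' < T ∧ ∀ t, T' ≤ t → ∀ x, φ t x = 0) →
    (∫ t in Set.Ioo 0 T, ∫ x in TorusBox,
        ((∑ i : Fin 3, v t x i * deriv (fun s => φ s x i) t) +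
         ∑ i : Fin 3, ∑ j : Fin 3,
           v t x i * v t x j * fderiv ℝ (fun y => φ t y i) x (unitVec j)))
      = - ∫ x in TorusBox, ∑ i : Fin 3, v₀ x i * φ 0 x i

structure IsLerayHopfSolution (T ν : ℝ) (v : ℝ → E3 → E3) (G : ℝ → E3 → E9)
    (v₀ : E3 → E3) : Prop where
  initMem : MemH v₀
  meas : Measurable (Function.uncurry v)
  measG : Measurable (Function.uncurry G)
  aeH : ∀ᵐ t ∂(volume.restrict (Set.Ioo 0 T)), MemH (v t)
  linfty : ∃ M : ℝ, ∀ᵐ t ∂(volume.restrict (Set.Ioo 0 T)), tLpNorm 2 (v t) ≤ ENNReal.ofReal M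
  aeGrad : ∀ᵐ t ∂(volume.restrict (Set.Ioo 0 T)), IsWeakGrad (v t) (G t)
  l2V : ∫⁻ t in Set.Ioo 0 T, (tLpNorm 2 (G t)) ^ 2 < ⊤
  weakForm : ∀ φ : ℝ → E3 → E3, ContDiff ℝ (⊤ : ℕ∞) (Function.uncurry φ) →
    (∀ t, Periodic3 (φ t)) → (∀ t x, divergence (φ t) x = 0) →
    (∃ T' : ℝ, T' < T ∧ ∀ t, T' ≤ t → ∀ x, φ t x = 0) →
    (∫ t in Set.Ioo 0 T, ∫ x in TorusBox,
        ((∑ i : Fin 3, v t x i * deriv (fun s => φ s x i) t)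
          - ν * ∑ i : Fin 3, ∑ j : Fin 3,
              G t x (i, j) * fderiv ℝ (fun y => φ t y i) x (unitVec j)
          + ∑ i : Fin 3, ∑ j : Fin 3,
              v t x i * v t x j * fderiv ℝ (fun y => φ t y i) x (unitVec j)))
      = - ∫ x in TorusBox, ∑ i : Fin 3, v₀ x i * φ 0 x i
  energyIneq : ∀ t ∈ Set.Icc 0 T,
    (1/2 : ℝ≥0∞) * (tLpNorm 2 (v t)) ^ 2
        + ENNReal.ofReal ν * ∫⁻ τ in Set.Ioo 0 t, (tLpNorm 2 (G τ)) ^ 2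
      ≤ (1/2 : ℝ≥0∞) * (tLpNorm 2 v₀) ^ 2
  initCont : Filter.Tendsto (fun t => tLpNorm 2 (fun x => v t x - v₀ x))
    (nhdsWithin 0 (Set.Ioi 0)) (nhds 0)

namespace CETaux

lemma two_pi_pos : (0:ℝ) < 2 * π := by positivity

/-- The basis `b3 i = (2π) • unitVec i` of `E3`. -/
def b3 : Module.Basis (Fin 3) ℝ E3 :=
  Module.Basis.ofEquivFun <|
    (WithLp.linearEquiv 2 ℝ (Fin 3 → ℝ)).trans
      (LinearEquiv.piCongrRight fun _ =>
        LinearEquiv.smulOfNeZero ℝ ℝ (2 * π)⁻¹ (inv_ne_zero two_pi_pos.ne'))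

lemma b3_repr (x : E3) (i : Fin 3) : b3.repr x i = (2 * π)⁻¹ * x i := by
  simp [b3, Module.Basis.ofEquivFun_repr_apply, WithLp.linearEquiv, smul_eq_mul]

lemma b3_apply (i : Fin 3) : b3 i = (2 * π) • unitVec i := by
  apply b3.repr.injective
  ext j
  rw [b3.repr_self, b3_repr]
  simp only [unitVec, PiLp.smul_apply, EuclideanSpace.single_apply, smul_eq_mul,
    Finsupp.single_apply]
  rcases eq_or_ne i j with h | h
  · subst h; simp; field_simp
  · simp [h, Ne.symm h]

lemma torus_eq : TorusBox = ZSpan.fundamentalDomain b3 := by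
  ext x
  simp only [TorusBox, Set.mem_setOf_eq, ZSpan.mem_fundamentalDomain, b3_repr, Set.mem_Ico]
  refine forall_congr' fun i => ?_
  constructor
  · rintro ⟨h0, h1⟩
    refine ⟨by positivity, ?_⟩
    rw [inv_mul_lt_iff₀ two_pi_pos, mul_one]; exact h1
  · rintro ⟨h0, h1⟩
    rw [inv_mul_lt_iff₀ two_pi_pos, mul_one] at h1
    refine ⟨?_, h1⟩
    by_contra hneg
    push_neg at hneg
    have : (2*π)⁻¹ * x i < 0 :=
      mul_neg_of_pos_of_neg (by positivity) hneg
    linarith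

lemma torus_measurable : MeasurableSet TorusBox := by
  rw [torus_eq]; exact ZSpan.fundamentalDomain_measurableSet b3

/-- The period lattice. -/
def Λ : AddSubgroup E3 := (Submodule.span ℤ (Set.range ⇑b3)).toAddSubgroup

instance : Countable Λ := by
  have : IsZLattice ℝ (Submodule.span ℤ (Set.range ⇑b3)) := inferInstance
  exact inferInstanceAs (Countable (Submodule.span ℤ (Set.range ⇑b3)))

lemma fd_torus : IsAddFundamentalDomain Λ TorusBox volume := by
  rw [torus_eq]; exact ZSpan.isAddFundamentalDomain' b3 volume

lemma periodic_lattice {F : Type*} {f : E3 → F} (hf : Periodic3 f) (γ : Λ) (x : E3) :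
    f (↑γ + x) = f x := by
  have key : ∀ v ∈ AddSubgroup.closure (Set.range ⇑b3), ∀ x, f (v + x) = f x := by
    intro v hv
    induction hv using AddSubgroup.closure_induction with
    | mem v hv =>
      obtain ⟨i, rfl⟩ := hv
      intro x
      rw [b3_apply, add_comm]
      exact hf x i
    | zero => intro x; simp
    | add v w hv hw ihv ihw => intro x; rw [add_assoc, ihv, ihw]
    | neg v hv ihv => intro x; rw [← ihv (-v + x)]; simp
  have hγ : (γ : E3) ∈ AddSubgroup.closure (Set.range ⇑b3) := by
    rw [← Submodule.span_int_eq_addSubgroupClosure]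
    exact γ.2
  exact key _ hγ x

end CETaux
namespace CETaux
open Pointwise

instance : VAddCommClass E3 Λ E3 :=
  ⟨fun g γ x => by
    change g + (↑γ + x) = ↑γ + (g + x)
    rw [add_left_comm]⟩

lemma preimage_add_torus (y : E3) :
    ((fun x => x + y) ⁻¹' TorusBox) = (-y) +ᵥ TorusBox := by
  ext z
  rw [Set.mem_preimage, Set.mem_vadd_set_iff_neg_vadd_mem]
  simp [add_comm]

lemma setLIntegral_translate (f : E3 → ℝ≥0∞) (hf : Measurable f)
    (hper : ∀ (γ : Λ) (x : E3), f (↑γ + x) = f x) (y : E3) :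
    ∫⁻ x in TorusBox, f (x - y) = ∫⁻ x in TorusBox, f x := by
  have h1 : IsAddFundamentalDomain Λ ((-y) +ᵥ TorusBox) volume :=
    fd_torus.vadd_of_comm (-y)
  calc ∫⁻ x in TorusBox, f (x - y)
      = ∫⁻ x, TorusBox.indicator (fun x => f (x - y)) x := by
        rw [lintegral_indicator torus_measurable]
    _ = ∫⁻ x, TorusBox.indicator (fun x => f (x - y)) (x + y) :=
        (lintegral_add_right_eq_self _ y).symm
    _ = ∫⁻ x, ((-y) +ᵥ TorusBox).indicator f x := by
        refine lintegral_congr fun x => ?_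
        rw [← preimage_add_torus]
        by_cases hx : x + y ∈ TorusBox
        · rw [Set.indicator_of_mem hx,
            Set.indicator_of_mem (show x ∈ (fun x => x + y) ⁻¹' TorusBox from hx),
            add_sub_cancel_right]
        · rw [Set.indicator_of_notMem hx,
            Set.indicator_of_notMem
              (show x ∉ (fun x => x + y) ⁻¹' TorusBox from fun h => hx h)]
    _ = ∫⁻ x in (-y) +ᵥ TorusBox, f x := by
        rw [lintegral_indicator]
        exact torus_measurable.const_vadd (-y)
    _ = ∫⁻ x in TorusBox, f x := h1.setLIntegral_eq fd_torus f fun γ x => hper γ x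

/-- The lattice part of `x`. -/
def latticePart (x : E3) : E3 := ∑ i, ((⌊x i / (2 * π)⌋ : ℤ) : ℝ) • ((2 * π) • unitVec i)

lemma latticePart_mem (x : E3) : latticePart x ∈ Λ := by
  refine Submodule.sum_mem _ fun i _ => ?_
  rw [← b3_apply, Int.cast_smul_eq_zsmul]
  exact Submodule.smul_mem _ _ (Submodule.subset_span (Set.mem_range_self i))

lemma latticePart_apply (x : E3) (j : Fin 3) :
    latticePart x j = 2 * π * (⌊x j / (2 * π)⌋ : ℤ) := by
  unfold latticePart
  rw [show (∑ i, ((⌊x i / (2 * π)⌋ : ℤ) : ℝ) • ((2 * π) • unitVec i)) j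
      = ∑ i, (((⌊x i / (2 * π)⌋ : ℤ) : ℝ) • ((2 * π) • unitVec i)) j from by
    rw [WithLp.ofLp_sum, Finset.sum_apply]]
  simp only [PiLp.smul_apply, unitVec, EuclideanSpace.single_apply, smul_eq_mul, zsmul_eq_mul]
  rw [Finset.sum_eq_single j]
  · simp [mul_comm]
  · intro i _ hij; simp [Ne.symm hij]
  · simp

/-- Reduction to the fundamental domain. -/
def rmap (x : E3) : E3 := x - latticePart x

lemma rmap_apply (x : E3) (j : Fin 3) :
    rmap x j = x j - 2 * π * (⌊x j / (2 * π)⌋ : ℤ) := by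
  rw [rmap, PiLp.sub_apply, latticePart_apply]

lemma rmap_mem (x : E3) : rmap x ∈ TorusBox := by
  intro j
  rw [rmap_apply]
  have h := Int.sub_floor_div_mul_nonneg (x j) two_pi_pos
  have h2 := Int.sub_floor_div_mul_lt (x j) two_pi_pos
  constructor
  · simpa [mul_comm] using h
  · simpa [mul_comm] using h2

lemma rmap_eq_self {x : E3} (hx : x ∈ TorusBox) : rmap x = x := by
  have : latticePart x = 0 := by
    unfold latticePart
    refine Finset.sum_eq_zero fun i _ => ?_
    have hi := hx i
    have : ⌊x i / (2 * π)⌋ = 0 := by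
      rw [Int.floor_eq_zero_iff]
      constructor
      · exact div_nonneg hi.1 two_pi_pos.le
      · rw [div_lt_one two_pi_pos]; exact hi.2
    simp [this]
  rw [rmap, this, sub_zero]

lemma rmap_measurable : Measurable rmap := by
  have hcoord : ∀ j : Fin 3, Measurable fun x : E3 => x j := fun j =>
    (PiLp.proj (𝕜 := ℝ) (p := 2) (β := fun _ : Fin 3 => ℝ) j).continuous.measurable
  have : Measurable latticePart := by
    unfold latticePart
    refine Finset.measurable_sum _ fun i _ => ?_
    exact ((measurable_from_top.comp ((hcoord i).div_const _).floor :
      Measurable fun x : E3 => ((⌊x i / (2 * π)⌋ : ℤ) : ℝ))).smul_const ((2 * π) • unitVec i : E3)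
  exact measurable_id.sub this

lemma rmap_periodic (x : E3) (i : Fin 3) : rmap (x + (2 * π) • unitVec i) = rmap x := by
  have hcoord : ∀ j, (x + (2 * π) • unitVec i) j = x j + (if j = i then 2 * π else 0) := by
    intro j
    rw [PiLp.add_apply, PiLp.smul_apply, unitVec, EuclideanSpace.single_apply]
    simp [mul_ite]
  apply PiLp.ext
  intro j
  rw [rmap_apply, rmap_apply, hcoord]
  rcases eq_or_ne j i with h | h
  · rw [if_pos h]
    rw [show (x j + 2 * π) / (2 * π) = x j / (2 * π) + 1 by field_simp,
      Int.floor_add_one]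
    push_cast
    ring
  · simp [h]

end CETaux
namespace CETaux

lemma outer_apply (a b : E3) (p : Fin 3 × Fin 3) : outer a b p = a p.1 * b p.2 := rfl

lemma outer_add_left (a b c : E3) : outer (a + b) c = outer a c + outer b c := by
  apply PiLp.ext; intro p
  simp only [outer_apply, PiLp.add_apply, outer_apply, add_mul]

lemma outer_add_right (a b c : E3) : outer a (b + c) = outer a b + outer a c := by
  apply PiLp.ext; intro p
  simp only [outer_apply, PiLp.add_apply, mul_add]

lemma outer_smul_left (r : ℝ) (a b : E3) : outer (r • a) b = r • outer a b := by
  apply PiLp.ext; intro p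
  simp only [outer_apply, PiLp.smul_apply, smul_eq_mul, mul_assoc]

lemma outer_smul_right (r : ℝ) (a b : E3) : outer a (r • b) = r • outer a b := by
  apply PiLp.ext; intro p
  simp only [outer_apply, PiLp.smul_apply, smul_eq_mul]
  ring

lemma outer_neg_left (a b : E3) : outer (-a) b = - outer a b := by
  apply PiLp.ext; intro p
  simp only [outer_apply, PiLp.neg_apply, neg_mul]

lemma outer_neg_right (a b : E3) : outer a (-b) = - outer a b := by
  apply PiLp.ext; intro p
  simp only [outer_apply, PiLp.neg_apply, mul_neg]

lemma outer_sub_left (a b c : E3) : outer (a - b) c = outer a c - outer b c := by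
  rw [sub_eq_add_neg, outer_add_left, outer_neg_left, sub_eq_add_neg]

lemma outer_sub_right (a b c : E3) : outer a (b - c) = outer a b - outer a c := by
  rw [sub_eq_add_neg, outer_add_right, outer_neg_right, sub_eq_add_neg]

lemma outer_expand (a b : E3) :
    outer (a - b) (a - b) = outer a a - outer a b - outer b a + outer b b := by
  rw [outer_sub_left, outer_sub_right, outer_sub_right]
  abel

lemma norm_outer (a b : E3) : ‖outer a b‖ = ‖a‖ * ‖b‖ := by
  rw [EuclideanSpace.norm_eq, EuclideanSpace.norm_eq, EuclideanSpace.norm_eq,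
    ← Real.sqrt_mul (by positivity)]
  congr 1
  rw [Fintype.sum_prod_type, Finset.sum_mul_sum]
  refine Finset.sum_congr rfl fun i _ => Finset.sum_congr rfl fun j _ => ?_
  simp [outer_apply, Real.norm_eq_abs, abs_mul, mul_pow]

lemma nnnorm_outer (a b : E3) : ‖outer a b‖₊ = ‖a‖₊ * ‖b‖₊ := by
  ext; simp [norm_outer]

/-- `outer · b` as a continuous linear map. -/
def outerL (b : E3) : E3 →L[ℝ] E9 :=
  LinearMap.toContinuousLinearMap
    { toFun := fun a => outer a b
      map_add' := fun a a' => outer_add_left a a' b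
      map_smul' := fun r a => outer_smul_left r a b }

lemma outerL_apply (b a : E3) : outerL b a = outer a b := rfl

/-- `outer a ·` as a continuous linear map. -/
def outerR (a : E3) : E3 →L[ℝ] E9 :=
  LinearMap.toContinuousLinearMap
    { toFun := fun b => outer a b
      map_add' := fun b b' => outer_add_right a b b'
      map_smul' := fun r b => outer_smul_right r a b }

lemma outerR_apply (a b : E3) : outerR a b = outer a b := rfl

end CETaux
namespace CETaux

/-- `outer` as a continuous bilinear map. -/
def outerB : E3 →L[ℝ] E3 →L[ℝ] E9 :=
  LinearMap.toContinuousLinearMap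
    { toFun := fun a => outerR a
      map_add' := fun a a' => ContinuousLinearMap.ext fun b => by
        simp only [outerR_apply, ContinuousLinearMap.add_apply, outer_add_left]
      map_smul' := fun r a => ContinuousLinearMap.ext fun b => by
        simp only [outerR_apply, ContinuousLinearMap.smul_apply, outer_smul_left,
          RingHom.id_apply] }

lemma houter_cont : Continuous fun p : E3 × E3 => outer p.1 p.2 := by
  have h : (fun p : E3 × E3 => outer p.1 p.2) = fun p : E3 × E3 => outerB p.1 p.2 := rfl
  rw [h]; exact outerB.continuous₂

end CETaux
namespace CETaux

section kernel

variable {ρ : E3 → ℝ} {ε : ℝ}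

lemma g_cont (hρ : IsMollifier ρ) :
    Continuous fun y : E3 => (ε ^ 3)⁻¹ * ρ (ε⁻¹ • y) :=
  continuous_const.mul (hρ.smooth.continuous.comp (continuous_const_smul ε⁻¹))

lemma g_hcs (hρ : IsMollifier ρ) (hε : ε ∈ Set.Ioc (0:ℝ) 1) :
    HasCompactSupport fun y : E3 => (ε ^ 3)⁻¹ * ρ (ε⁻¹ • y) := by
  apply HasCompactSupport.intro (isCompact_closedBall (0:E3) 1)
  intro y hy
  rw [Metric.mem_closedBall, dist_zero_right, not_le] at hy
  have hz : ρ (ε⁻¹ • y) = 0 := by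
    by_contra h
    have hmem := hρ.support_subset (Function.mem_support.mpr h)
    rw [Metric.mem_ball, dist_zero_right, norm_smul, norm_inv, Real.norm_eq_abs,
      abs_of_pos hε.1] at hmem
    have : ‖y‖ < ε := by
      rw [inv_mul_lt_iff₀ hε.1, mul_one] at hmem
      exact hmem
    linarith [hε.2]
  simp [hz]

lemma g_integrable (hρ : IsMollifier ρ) (hε : ε ∈ Set.Ioc (0:ℝ) 1) :
    Integrable (fun y : E3 => (ε ^ 3)⁻¹ * ρ (ε⁻¹ • y)) volume :=
  (g_cont hρ).integrable_of_hasCompactSupport (g_hcs hρ hε)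

lemma g_integral_one (hρ : IsMollifier ρ) (hε : ε ∈ Set.Ioc (0:ℝ) 1) :
    ∫ y : E3, (ε ^ 3)⁻¹ * ρ (ε⁻¹ • y) = 1 := by
  have hε0 : (0:ℝ) < ε := hε.1
  rw [MeasureTheory.integral_const_mul]
  have h := MeasureTheory.Measure.integral_comp_smul (volume : Measure E3) ρ ε⁻¹
  rw [finrank_euclideanSpace_fin, hρ.integral_one] at h
  rw [h]
  have hε3 : (0:ℝ) < ε ^ 3 := by positivity
  rw [smul_eq_mul, mul_one, inv_pow, inv_inv, abs_of_pos hε3]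
  field_simp

lemma g_nonneg (hρ : IsMollifier ρ) (hε : ε ∈ Set.Ioc (0:ℝ) 1) (y : E3) :
    0 ≤ (ε ^ 3)⁻¹ * ρ (ε⁻¹ • y) := by
  have hε0 : (0:ℝ) < ε := hε.1
  have h1 := hρ.nonneg (ε⁻¹ • y)
  have h2 : (0:ℝ) < (ε ^ 3)⁻¹ := by positivity
  exact mul_nonneg h2.le h1

end kernel

end CETaux

open Pointwise CETaux in
/-- The Constantin–E–Titi commutator identity:
`(u⊗u)_ε = u_ε ⊗ u_ε + r_ε(u,u) - (u - u_ε) ⊗ (u - u_ε)` a.e. on `𝕋³`. -/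
theorem cet_commutator_identity (ρ : E3 → ℝ) (hρ : IsMollifier ρ)
    (u : E3 → E3) (hu : Periodic3 u) (huL2 : MemLp u 2 μT)
    (ε : ℝ) (hε : ε ∈ Set.Ioc (0 : ℝ) 1) :
    ∀ᵐ x ∂μT,
      mollify ρ ε (fun z => outer (u z) (u z)) x
        = outer (mollify ρ ε u x) (mollify ρ ε u x) + rCET ρ ε u x
            - outer (u x - mollify ρ ε u x) (u x - mollify ρ ε u x) := by
  classical
  have hε0 : (0:ℝ) < ε := hε.1
  set g : E3 → ℝ := fun y => (ε ^ 3)⁻¹ * ρ (ε⁻¹ • y) with hg_def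
  have hg_cont : Continuous g := g_cont hρ
  have hg_int : Integrable g volume := g_integrable hρ hε
  have hg_one : ∫ y, g y = 1 := g_integral_one hρ hε
  have hGfin : ∫⁻ y, (‖g y‖₊ : ℝ≥0∞) < ⊤ := hg_int.2
  have hG_meas : Measurable fun y => (‖g y‖₊ : ℝ≥0∞) :=
    hg_cont.measurable.nnnorm.coe_nnreal_ennreal
  -- measurable periodic representative
  obtain ⟨v, hv_sm, hv_eq⟩ := huL2.1
  set w : E3 → E3 := fun x => v (rmap x) with hw_def
  have hw_sm : StronglyMeasurable w := hv_sm.comp_measurable rmap_measurable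
  have hu_rmap : ∀ x, u (rmap x) = u x := by
    intro x
    conv_rhs => rw [show x = ↑(⟨latticePart x, latticePart_mem x⟩ : Λ) + rmap x from by
      show x = latticePart x + rmap x; rw [CETaux.rmap]; abel]
    exact (periodic_lattice hu ⟨latticePart x, latticePart_mem x⟩ (CETaux.rmap x)).symm
  have hw_per : Periodic3 w := fun x i => by
    show v (rmap (x + (2*π) • unitVec i)) = v (rmap x)
    rw [rmap_periodic]
  have hNnull : volume ({z | ¬ u z = v z} ∩ TorusBox) = 0 := by
    have h0 : μT {z | ¬ u z = v z} = 0 := ae_iff.mp hv_eq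
    rw [μT, Measure.restrict_apply' torus_measurable] at h0
    exact h0
  have huw : u =ᵐ[volume] w := by
    rw [Filter.EventuallyEq, ae_iff]
    refine measure_mono_null
      (t := ⋃ γ : Λ, ((γ : E3) +ᵥ ({z | ¬ u z = v z} ∩ TorusBox))) (fun x hx => ?_) ?_
    · simp only [Set.mem_iUnion]
      refine ⟨⟨latticePart x, latticePart_mem x⟩, ?_⟩
      rw [Set.mem_vadd_set_iff_neg_vadd_mem]
      have hxr : -(latticePart x) +ᵥ x = rmap x := by
        show -(latticePart x) + x = rmap x; rw [CETaux.rmap]; abel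
      rw [hxr]
      refine ⟨fun hEq => hx ?_, rmap_mem x⟩
      show u x = w x
      calc u x = u (rmap x) := (hu_rmap x).symm
        _ = v (rmap x) := hEq
        _ = w x := rfl
    · refine measure_iUnion_null fun γ : Λ => ?_
      rw [measure_vadd]
      exact hNnull
  -- the key finiteness via Tonelli
  set F : E3 → ℝ≥0∞ := fun z => (‖w z‖₊ : ℝ≥0∞) ^ 2 with hF_def
  have hF_meas : Measurable F := (hw_sm.measurable.nnnorm.coe_nnreal_ennreal).pow_const 2
  have hF_per : ∀ (γ : Λ) (z : E3), F (↑γ + z) = F z := fun γ z => by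
    simp only [hF_def]
    rw [periodic_lattice hw_per γ z]
  have hK : (∫⁻ z in TorusBox, F z) < ⊤ := by
    have h2 : ∀ᵐ z ∂μT, F z = (‖(‖u z‖ ^ ((2:ℝ≥0∞)).toReal)‖₊ : ℝ≥0∞) := by
      filter_upwards [hv_eq, ae_restrict_mem torus_measurable] with z h1 h2
      have hwz : w z = u z := by
        show v (rmap z) = u z
        rw [rmap_eq_self h2, ← h1]
      simp only [hF_def, hwz]
      rw [ENNReal.toReal_ofNat, show (2:ℝ) = ((2:ℕ):ℝ) by norm_num, Real.rpow_natCast,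
        nnnorm_pow, nnnorm_norm, ENNReal.coe_pow]
    have hi := huL2.integrable_norm_rpow (by norm_num) (by norm_num)
    have hfin := hi.2
    calc ∫⁻ z in TorusBox, F z
        = ∫⁻ z, (‖(‖u z‖ ^ ((2:ℝ≥0∞)).toReal)‖₊ : ℝ≥0∞) ∂μT := lintegral_congr_ae h2
      _ < ⊤ := hfin
  have hprod : Measurable (Function.uncurry fun (x y : E3) => (‖g y‖₊ : ℝ≥0∞) * F (x - y)) := by
    refine Measurable.mul (f := fun p : E3 × E3 => (‖g p.2‖₊ : ℝ≥0∞))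
      (g := fun p : E3 × E3 => F (p.1 - p.2)) ?_ ?_
    · exact hG_meas.comp measurable_snd
    · exact hF_meas.comp (measurable_fst.sub measurable_snd)
  have hdouble : (∫⁻ x in TorusBox, (∫⁻ y, (‖g y‖₊ : ℝ≥0∞) * F (x - y))) < ⊤ := by
    calc ∫⁻ x in TorusBox, (∫⁻ y, (‖g y‖₊ : ℝ≥0∞) * F (x - y))
        = ∫⁻ y, ∫⁻ x in TorusBox, (‖g y‖₊ : ℝ≥0∞) * F (x - y) :=
          lintegral_lintegral_swap hprod.aemeasurable
      _ = ∫⁻ y, (‖g y‖₊ : ℝ≥0∞) * ∫⁻ x in TorusBox, F (x - y) := by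
          refine lintegral_congr fun y => ?_
          exact lintegral_const_mul _ (hF_meas.comp (measurable_id.sub measurable_const))
      _ = ∫⁻ y, (‖g y‖₊ : ℝ≥0∞) * ∫⁻ z in TorusBox, F z := by
          refine lintegral_congr fun y => ?_
          rw [setLIntegral_translate F hF_meas hF_per y]
      _ = (∫⁻ y, (‖g y‖₊ : ℝ≥0∞)) * ∫⁻ z in TorusBox, F z := lintegral_mul_const _ hG_meas
      _ < ⊤ := ENNReal.mul_lt_top hGfin hK
  have haefin : ∀ᵐ x ∂μT, (∫⁻ y, (‖g y‖₊ : ℝ≥0∞) * F (x - y)) < ⊤ :=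
    ae_lt_top hprod.lintegral_prod_right' hdouble.ne
  filter_upwards [haefin] with x hx
  -- facts at the fixed point `x`
  have hmp : MeasurePreserving (fun y : E3 => x - y) volume volume :=
    Measure.measurePreserving_sub_left volume x
  have huw_x : (fun y => u (x - y)) =ᵐ[volume] fun y => w (x - y) :=
    hmp.quasiMeasurePreserving.ae_eq huw
  have hq_meas : Measurable fun y : E3 => w (x - y) :=
    hw_sm.measurable.comp (measurable_const.sub measurable_id)
  have hq_sm : StronglyMeasurable fun y : E3 => w (x - y) :=
    hw_sm.comp_measurable (measurable_const.sub measurable_id)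
  have hxw2 : (∫⁻ y, (‖g y‖₊ : ℝ≥0∞) * ((‖w (x - y)‖₊ : ℝ≥0∞)) ^ 2) < ⊤ := hx
  have hone : ∀ t : ℝ≥0∞, t ≤ 1 + t ^ 2 := by
    intro t
    rcases le_total t 1 with h | h
    · exact h.trans le_self_add
    · calc t = t * 1 := (mul_one t).symm
        _ ≤ t * t := by gcongr
        _ = t ^ 2 := (sq t).symm
        _ ≤ 1 + t ^ 2 := le_add_self
  have hxw1 : (∫⁻ y, (‖g y‖₊ : ℝ≥0∞) * (‖w (x - y)‖₊ : ℝ≥0∞)) < ⊤ := by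
    calc ∫⁻ y, (‖g y‖₊ : ℝ≥0∞) * (‖w (x - y)‖₊ : ℝ≥0∞)
        ≤ ∫⁻ y, ((‖g y‖₊ : ℝ≥0∞) * 1 + (‖g y‖₊ : ℝ≥0∞) * (‖w (x - y)‖₊ : ℝ≥0∞) ^ 2) := by
          refine lintegral_mono fun y => ?_
          rw [← mul_add]
          exact mul_le_mul_right (hone _) _
      _ = (∫⁻ y, (‖g y‖₊ : ℝ≥0∞) * 1)
            + ∫⁻ y, (‖g y‖₊ : ℝ≥0∞) * (‖w (x - y)‖₊ : ℝ≥0∞) ^ 2 :=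
          lintegral_add_left (hG_meas.mul_const 1) _
      _ < ⊤ := ENNReal.add_lt_top.mpr ⟨by simpa using hGfin, hxw2⟩
  -- integrability of all the pieces
  have hAESM_u : AEStronglyMeasurable (fun y => u (x - y)) volume := ⟨_, hq_sm, huw_x⟩
  have hI5 : Integrable (fun y => g y • u (x - y)) volume := by
    refine ⟨hg_cont.aestronglyMeasurable.smul hAESM_u, ?_⟩
    show (∫⁻ y, (‖g y • u (x - y)‖₊ : ℝ≥0∞)) < ⊤
    calc ∫⁻ y, (‖g y • u (x - y)‖₊ : ℝ≥0∞)
        = ∫⁻ y, (‖g y‖₊ : ℝ≥0∞) * (‖u (x - y)‖₊ : ℝ≥0∞) := by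
          refine lintegral_congr fun y => ?_
          rw [nnnorm_smul, ENNReal.coe_mul]
      _ = ∫⁻ y, (‖g y‖₊ : ℝ≥0∞) * (‖w (x - y)‖₊ : ℝ≥0∞) := by
          refine lintegral_congr_ae ?_
          filter_upwards [huw_x] with y hy
          rw [hy]
      _ < ⊤ := hxw1
  have hAESM_uu : AEStronglyMeasurable (fun y => outer (u (x - y)) (u (x - y))) volume :=
    ⟨fun y => outer (w (x - y)) (w (x - y)),
     (houter_cont.measurable.comp (hq_meas.prodMk hq_meas)).stronglyMeasurable,
     by filter_upwards [huw_x] with y hy; rw [hy]⟩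
  have hI1 : Integrable (fun y => g y • outer (u (x - y)) (u (x - y))) volume := by
    refine ⟨hg_cont.aestronglyMeasurable.smul hAESM_uu, ?_⟩
    show (∫⁻ y, (‖g y • outer (u (x - y)) (u (x - y))‖₊ : ℝ≥0∞)) < ⊤
    calc ∫⁻ y, (‖g y • outer (u (x - y)) (u (x - y))‖₊ : ℝ≥0∞)
        = ∫⁻ y, (‖g y‖₊ : ℝ≥0∞) * ((‖u (x - y)‖₊ : ℝ≥0∞) * (‖u (x - y)‖₊ : ℝ≥0∞)) := by
          refine lintegral_congr fun y => ?_
          rw [nnnorm_smul, nnnorm_outer, ENNReal.coe_mul, ENNReal.coe_mul]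
      _ = ∫⁻ y, (‖g y‖₊ : ℝ≥0∞) * ((‖w (x - y)‖₊ : ℝ≥0∞)) ^ 2 := by
          refine lintegral_congr_ae ?_
          filter_upwards [huw_x] with y hy
          rw [hy, sq]
      _ < ⊤ := hxw2
  have hAESM_mix : AEStronglyMeasurable (fun y => outer (u (x - y)) (u x)) volume :=
    ⟨fun y => outer (w (x - y)) (u x),
     (houter_cont.measurable.comp (hq_meas.prodMk measurable_const)).stronglyMeasurable,
     by filter_upwards [huw_x] with y hy; rw [hy]⟩
  have hAESM_mix' : AEStronglyMeasurable (fun y => outer (u x) (u (x - y))) volume :=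
    ⟨fun y => outer (u x) (w (x - y)),
     (houter_cont.measurable.comp (measurable_const.prodMk hq_meas)).stronglyMeasurable,
     by filter_upwards [huw_x] with y hy; rw [hy]⟩
  have hmixfin : (∫⁻ y, (‖g y‖₊ : ℝ≥0∞) * ((‖u (x - y)‖₊ : ℝ≥0∞) * (‖u x‖₊ : ℝ≥0∞))) < ⊤ := by
    calc ∫⁻ y, (‖g y‖₊ : ℝ≥0∞) * ((‖u (x - y)‖₊ : ℝ≥0∞) * (‖u x‖₊ : ℝ≥0∞))
        = ∫⁻ y, ((‖g y‖₊ : ℝ≥0∞) * (‖w (x - y)‖₊ : ℝ≥0∞)) * (‖u x‖₊ : ℝ≥0∞) := by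
          refine lintegral_congr_ae ?_
          filter_upwards [huw_x] with y hy
          rw [hy, mul_assoc]
      _ = (∫⁻ y, (‖g y‖₊ : ℝ≥0∞) * (‖w (x - y)‖₊ : ℝ≥0∞)) * (‖u x‖₊ : ℝ≥0∞) :=
          lintegral_mul_const _ (hG_meas.mul hq_meas.nnnorm.coe_nnreal_ennreal)
      _ < ⊤ := ENNReal.mul_lt_top hxw1 ENNReal.coe_lt_top
  have hI2 : Integrable (fun y => g y • outer (u (x - y)) (u x)) volume := by
    refine ⟨hg_cont.aestronglyMeasurable.smul hAESM_mix, ?_⟩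
    show (∫⁻ y, (‖g y • outer (u (x - y)) (u x)‖₊ : ℝ≥0∞)) < ⊤
    calc ∫⁻ y, (‖g y • outer (u (x - y)) (u x)‖₊ : ℝ≥0∞)
        = ∫⁻ y, (‖g y‖₊ : ℝ≥0∞) * ((‖u (x - y)‖₊ : ℝ≥0∞) * (‖u x‖₊ : ℝ≥0∞)) := by
          refine lintegral_congr fun y => ?_
          rw [nnnorm_smul, nnnorm_outer, ENNReal.coe_mul, ENNReal.coe_mul]
      _ < ⊤ := hmixfin
  have hI3 : Integrable (fun y => g y • outer (u x) (u (x - y))) volume := by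
    refine ⟨hg_cont.aestronglyMeasurable.smul hAESM_mix', ?_⟩
    show (∫⁻ y, (‖g y • outer (u x) (u (x - y))‖₊ : ℝ≥0∞)) < ⊤
    calc ∫⁻ y, (‖g y • outer (u x) (u (x - y))‖₊ : ℝ≥0∞)
        = ∫⁻ y, (‖g y‖₊ : ℝ≥0∞) * ((‖u (x - y)‖₊ : ℝ≥0∞) * (‖u x‖₊ : ℝ≥0∞)) := by
          refine lintegral_congr fun y => ?_
          rw [nnnorm_smul, nnnorm_outer, ENNReal.coe_mul, ENNReal.coe_mul, mul_comm
            ((‖u x‖₊ : ℝ≥0∞))]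
      _ < ⊤ := hmixfin
  have hI4 : Integrable (fun y => g y • outer (u x) (u x)) volume :=
    hg_int.smul_const (outer (u x) (u x))
  -- the commutator computation
  have h2 : (∫ y, g y • outer (u (x - y)) (u x)) = outer (mollify ρ ε u x) (u x) := by
    have hfun : (fun y => g y • outer (u (x - y)) (u x))
        = fun y => outerL (u x) (g y • u (x - y)) := by
      funext y
      rw [_root_.map_smul, outerL_apply]
    rw [hfun, (outerL (u x)).integral_comp_comm hI5, outerL_apply]
    exact rfl
  have h3 : (∫ y, g y • outer (u x) (u (x - y))) = outer (u x) (mollify ρ ε u x) := by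
    have hfun : (fun y => g y • outer (u x) (u (x - y)))
        = fun y => outerR (u x) (g y • u (x - y)) := by
      funext y
      rw [_root_.map_smul, outerR_apply]
    rw [hfun, (outerR (u x)).integral_comp_comm hI5, outerR_apply]
    exact rfl
  have h4 : (∫ y, g y • outer (u x) (u x)) = outer (u x) (u x) := by
    rw [integral_smul_const, hg_one, one_smul]
  have hrc : rCET ρ ε u x
      = mollify ρ ε (fun z => outer (u z) (u z)) x
        - outer (mollify ρ ε u x) (u x) - outer (u x) (mollify ρ ε u x)
        + outer (u x) (u x) := by
    have hunfold : rCET ρ ε u x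
        = ∫ y, (((g y • outer (u (x - y)) (u (x - y))
            - g y • outer (u (x - y)) (u x))
            - g y • outer (u x) (u (x - y)))
            + g y • outer (u x) (u x)) := by
      show (∫ y, g y • outer (u (x - y) - u x) (u (x - y) - u x)) = _
      congr 1
      funext y
      rw [outer_expand, smul_add, smul_sub, smul_sub]
    have hIa : Integrable (fun y =>
        g y • outer (u (x - y)) (u (x - y)) - g y • outer (u (x - y)) (u x)) volume :=
      hI1.sub hI2
    have hIb : Integrable (fun y =>
        (g y • outer (u (x - y)) (u (x - y)) - g y • outer (u (x - y)) (u x))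
          - g y • outer (u x) (u (x - y))) volume := hIa.sub hI3
    rw [hunfold, integral_add hIb hI4, integral_sub hIa hI3, integral_sub hI1 hI2, h2, h3, h4]
    have hM : (∫ y, g y • outer (u (x - y)) (u (x - y)))
        = mollify ρ ε (fun z => outer (u z) (u z)) x := rfl
    rw [hM]
  rw [hrc, outer_expand]
  abel
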